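/- Assume (A1) and (A2). The no-swap-regret menu M_NSR is a menu and is Pareto-optimal. -/

import Mathlib

open Finset

noncomputable section

/-- The product CSP `x ⊗ y`. -/
def prodCSP {m n : ℕ} (x : Fin m → ℝ) (y : Fin n → ℝ) : Fin m × Fin n → ℝ :=
  fun p => x p.1 * y p.2

/-- The `j`-th vertex `e_j` of a simplex. -/
def pureVec {k : ℕ} (j : Fin k) : Fin k → ℝ := fun j' => if j' = j then 1 else 0

/-- Linear extension of a payoff to CSPs. -/
def linCSP {m n : ℕ} (u : Fin m → Fin n → ℝ) (φ : Fin m × Fin n → ℝ) : ℝ :=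
  ∑ p : Fin m × Fin n, φ p * u p.1 p.2

/-- Payoff the learner would get by always deviating to the pure action `j'`. -/
def devCSP {m n : ℕ} (u : Fin m → Fin n → ℝ) (φ : Fin m × Fin n → ℝ) (j' : Fin n) : ℝ :=
  ∑ p : Fin m × Fin n, φ p * u p.1 j'

/-- Bilinear extension of a payoff to mixed strategies. -/
def mixPay {m n : ℕ} (u : Fin m → Fin n → ℝ) (x : Fin m → ℝ) (y : Fin n → ℝ) : ℝ :=
  ∑ i, ∑ j, x i * y j * u i j

/-- Pure best responses of the learner to the optimizer mixed strategy `x`. -/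
def BRL {m n : ℕ} (u : Fin m → Fin n → ℝ) (x : Fin m → ℝ) : Set (Fin n) :=
  {j | ∀ j' : Fin n, (∑ i, x i * u i j') ≤ ∑ i, x i * u i j}

/-- A CSP is no-regret. -/
def NoRegret {m n : ℕ} (u : Fin m → Fin n → ℝ) (φ : Fin m × Fin n → ℝ) : Prop :=
  ∀ j' : Fin n, devCSP u φ j' ≤ linCSP u φ

/-- A CSP is no-swap-regret. -/
def NoSwapRegret {m n : ℕ} (u : Fin m → Fin n → ℝ) (φ : Fin m × Fin n → ℝ) : Prop :=
  ∀ j j' : Fin n, (∑ i, φ (i, j) * u i j') ≤ ∑ i, φ (i, j) * u i j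

/-- The no-regret menu: all no-regret CSPs. -/
def MNR {m n : ℕ} (u : Fin m → Fin n → ℝ) : Set (Fin m × Fin n → ℝ) :=
  {φ | φ ∈ stdSimplex ℝ (Fin m × Fin n) ∧ NoRegret u φ}

/-- The no-swap-regret menu: all no-swap-regret CSPs. -/
def MNSR {m n : ℕ} (u : Fin m → Fin n → ℝ) : Set (Fin m × Fin n → ℝ) :=
  {φ | φ ∈ stdSimplex ℝ (Fin m × Fin n) ∧ NoSwapRegret u φ}

/-- A menu: a closed convex subset of the simplex of CSPs such that every optimizer
mixed strategy has some product response inside the set. -/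
def IsMenu {m n : ℕ} (M : Set (Fin m × Fin n → ℝ)) : Prop :=
  IsClosed M ∧ Convex ℝ M ∧ M ⊆ stdSimplex ℝ (Fin m × Fin n) ∧
    ∀ x ∈ stdSimplex ℝ (Fin m), ∃ y ∈ stdSimplex ℝ (Fin n), prodCSP x y ∈ M

/-- The learner's value when the optimizer with payoff `uO` picks their favorite point
of the menu `M`, breaking ties in the learner's favor. -/
def VL {m n : ℕ} (uL uO : Fin m → Fin n → ℝ) (M : Set (Fin m × Fin n → ℝ)) : ℝ :=
  sSup (linCSP uL '' {φ ∈ M | ∀ ψ ∈ M, linCSP uO ψ ≤ linCSP uO φ})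

/-- `M'` Pareto-dominates `M` (for the learner payoff `uL`). -/
def ParetoDominates {m n : ℕ} (uL : Fin m → Fin n → ℝ)
    (M' M : Set (Fin m × Fin n → ℝ)) : Prop :=
  (∀ uO : Fin m → Fin n → ℝ, VL uL uO M ≤ VL uL uO M') ∧
    ∃ uO : Fin m → Fin n → ℝ, VL uL uO M < VL uL uO M'

/-- A menu is Pareto-optimal if it is a menu and no menu Pareto-dominates it. -/
def ParetoOptimal {m n : ℕ} (uL : Fin m → Fin n → ℝ) (M : Set (Fin m × Fin n → ℝ)) : Prop :=
  IsMenu M ∧ ∀ M' : Set (Fin m × Fin n → ℝ), IsMenu M' → ¬ ParetoDominates uL M' M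

/-- (A2): no weakly dominated learner actions. -/
def A2cond {m n : ℕ} (u : Fin m → Fin n → ℝ) : Prop :=
  ∀ j : Fin n, (∃ x ∈ stdSimplex ℝ (Fin m), j ∈ BRL u x) →
    ∃ x' ∈ stdSimplex ℝ (Fin m), BRL u x' = {j}

/-- `U^-(M)`: the minimal learner utility over `M`. -/
def UminusVal {m n : ℕ} (u : Fin m → Fin n → ℝ) (M : Set (Fin m × Fin n → ℝ)) : ℝ :=
  sInf (linCSP u '' M)

/-- `U^+(M)`: the maximal learner utility over `M`. -/
def UplusVal {m n : ℕ} (u : Fin m → Fin n → ℝ) (M : Set (Fin m × Fin n → ℝ)) : ℝ :=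
  sSup (linCSP u '' M)

/-- `M^-`: the set of learner-utility-minimizing points of `M`. -/
def MminusSet {m n : ℕ} (u : Fin m → Fin n → ℝ) (M : Set (Fin m × Fin n → ℝ)) :
    Set (Fin m × Fin n → ℝ) :=
  {φ ∈ M | linCSP u φ = UminusVal u M}

/-- `M^+`: the set of learner-utility-maximizing points of `M`. -/
def MplusSet {m n : ℕ} (u : Fin m → Fin n → ℝ) (M : Set (Fin m × Fin n → ℝ)) :
    Set (Fin m × Fin n → ℝ) :=
  {φ ∈ M | linCSP u φ = UplusVal u M}

/-- The zero-sum value `U_ZS = min_x max_y u_L(x,y)`. -/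
def UZSval {m n : ℕ} (u : Fin m → Fin n → ℝ) : ℝ :=
  sInf ((fun x => sSup ((fun y => mixPay u x y) '' stdSimplex ℝ (Fin n))) ''
    stdSimplex ℝ (Fin m))


namespace NSR

variable {m n : ℕ}

lemma continuous_linCSP (u : Fin m → Fin n → ℝ) : Continuous (linCSP u) := by
  unfold linCSP
  exact continuous_finset_sum _ fun p _ => (continuous_apply p).mul continuous_const

lemma linCSP_combo (u v : Fin m → Fin n → ℝ) (r : ℝ) (φ : Fin m × Fin n → ℝ) :
    linCSP (fun i j => u i j + r * v i j) φ = linCSP u φ + r * linCSP v φ := by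
  unfold linCSP
  rw [Finset.mul_sum, ← Finset.sum_add_distrib]
  congr 1; ext p; ring

lemma abs_linCSP_le_one {u : Fin m → Fin n → ℝ} (hb : ∀ i j, u i j ∈ Set.Icc (-1:ℝ) 1)
    {φ : Fin m × Fin n → ℝ} (hφ : φ ∈ stdSimplex ℝ (Fin m × Fin n)) :
    |linCSP u φ| ≤ 1 := by
  have h1 : |linCSP u φ| ≤ ∑ p : Fin m × Fin n, |φ p * u p.1 p.2| := Finset.abs_sum_le_sum_abs _ _
  have h2 : ∀ p : Fin m × Fin n, |φ p * u p.1 p.2| ≤ φ p := by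
    intro p
    rw [abs_mul, abs_of_nonneg (hφ.1 p)]
    have := abs_le.2 ⟨(hb p.1 p.2).1, (hb p.1 p.2).2⟩
    calc φ p * |u p.1 p.2| ≤ φ p * 1 := mul_le_mul_of_nonneg_left this (hφ.1 p)
      _ = φ p := mul_one _
  calc |linCSP u φ| ≤ ∑ p, |φ p * u p.1 p.2| := h1
    _ ≤ ∑ p, φ p := Finset.sum_le_sum fun p _ => h2 p
    _ = 1 := hφ.2

def argSet (uO : Fin m → Fin n → ℝ) (M : Set (Fin m × Fin n → ℝ)) : Set (Fin m × Fin n → ℝ) :=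
  {φ ∈ M | ∀ ψ ∈ M, linCSP uO ψ ≤ linCSP uO φ}

/-- max value of a linear payoff on a set -/
def mval (uO : Fin m → Fin n → ℝ) (M : Set (Fin m × Fin n → ℝ)) : ℝ :=
  sSup (linCSP uO '' M)

section Cpt
variable {M : Set (Fin m × Fin n → ℝ)} (hM : IsCompact M) (hMcl : IsClosed M) (hne : M.Nonempty)

include hM hne in
lemma mval_spec (uO : Fin m → Fin n → ℝ) :
    (∃ φ ∈ M, linCSP uO φ = mval uO M) ∧ ∀ ψ ∈ M, linCSP uO ψ ≤ mval uO M := by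
  obtain ⟨φ, hφ, hmax⟩ := hM.exists_isMaxOn hne (continuous_linCSP uO).continuousOn
  have hgr : IsGreatest (linCSP uO '' M) (linCSP uO φ) :=
    ⟨⟨φ, hφ, rfl⟩, by rintro _ ⟨ψ, hψ, rfl⟩; exact hmax hψ⟩
  have he : mval uO M = linCSP uO φ := hgr.csSup_eq
  exact ⟨⟨φ, hφ, he.symm⟩, fun ψ hψ => he ▸ hmax hψ⟩

include hM hne in
lemma argSet_mem_mval {uO : Fin m → Fin n → ℝ} {φ : Fin m × Fin n → ℝ}
    (hφ : φ ∈ argSet uO M) : linCSP uO φ = mval uO M := by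
  obtain ⟨⟨ψ, hψ, hψe⟩, hub⟩ := mval_spec hM hne uO
  exact le_antisymm (hub φ hφ.1) (hψe ▸ hφ.2 ψ hψ)

include hM hMcl hne in
lemma argSet_nonempty (uO : Fin m → Fin n → ℝ) : (argSet uO M).Nonempty := by
  obtain ⟨φ, hφ, hmax⟩ := hM.exists_isMaxOn hne (continuous_linCSP uO).continuousOn
  exact ⟨φ, hφ, fun ψ hψ => hmax hψ⟩

include hM hMcl hne in
lemma VL_spec (uL uO : Fin m → Fin n → ℝ) :
    ∃ φ ∈ argSet uO M, linCSP uL φ = VL uL uO M ∧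
      ∀ ψ ∈ argSet uO M, linCSP uL ψ ≤ VL uL uO M := by
  have hAcl : IsClosed (argSet uO M) := by
    have : argSet uO M = M ∩ ⋂ ψ ∈ M, {φ | linCSP uO ψ ≤ linCSP uO φ} := by
      ext φ; simp [argSet, Set.mem_iInter]
    rw [this]
    exact hMcl.inter (isClosed_biInter fun ψ _ =>
      isClosed_le continuous_const (continuous_linCSP uO))
  have hA : IsCompact (argSet uO M) := hM.of_isClosed_subset hAcl fun _ h => h.1
  have hAne : (argSet uO M).Nonempty := argSet_nonempty hM hMcl hne uO
  obtain ⟨φ, hφ, hmax⟩ := hA.exists_isMaxOn hAne (continuous_linCSP uL).continuousOn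
  have hgr : IsGreatest (linCSP uL '' argSet uO M) (linCSP uL φ) :=
    ⟨⟨φ, hφ, rfl⟩, by rintro _ ⟨ψ, hψ, rfl⟩; exact hmax hψ⟩
  have he : VL uL uO M = linCSP uL φ := hgr.csSup_eq
  exact ⟨φ, hφ, he.symm, fun ψ hψ => he ▸ hmax hψ⟩

include hM hMcl hne in
/-- (A): lower slope bound via the learner-favourable maximizer. -/
lemma slope_lower (uL uO : Fin m → Fin n → ℝ) (r h : ℝ) (hh : 0 ≤ h) :
    mval (fun i j => uO i j + r * uL i j) M + h * VL uL (fun i j => uO i j + r * uL i j) M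
      ≤ mval (fun i j => uO i j + (r + h) * uL i j) M := by
  obtain ⟨φ, hφA, hφe, _⟩ := VL_spec hM hMcl hne uL (fun i j => uO i j + r * uL i j)
  have h1 : linCSP (fun i j => uO i j + r * uL i j) φ
      = mval (fun i j => uO i j + r * uL i j) M := argSet_mem_mval hM hne hφA
  have h2 := (mval_spec hM hne (fun i j => uO i j + (r + h) * uL i j)).2 φ hφA.1
  rw [linCSP_combo] at h2
  rw [linCSP_combo] at h1
  rw [← hφe]
  nlinarith [h2, h1]

include hM hMcl hne in
/-- (B): upper semicontinuity of the learner tie-broken value. -/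
lemma usc_bound (uL uO : Fin m → Fin n → ℝ) {ε : ℝ} (hε : 0 < ε) :
    ∃ δ > 0, ∀ φ ∈ M, mval uO M - δ ≤ linCSP uO φ → linCSP uL φ ≤ VL uL uO M + ε := by
  by_contra hcon
  push_neg at hcon
  set K : ℕ → Set (Fin m × Fin n → ℝ) := fun k =>
    {φ ∈ M | mval uO M - 1/(k+1) ≤ linCSP uO φ ∧ VL uL uO M + ε ≤ linCSP uL φ} with hK
  have hKne : ∀ k, (K k).Nonempty := by
    intro k
    obtain ⟨φ, hφM, hφ1, hφ2⟩ := hcon (1/(k+1)) (by positivity)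
    exact ⟨φ, hφM, hφ1, le_of_lt hφ2⟩
  have hKcl : ∀ k, IsClosed (K k) := by
    intro k
    refine hMcl.inter ((isClosed_le continuous_const (continuous_linCSP uO)).inter
      (isClosed_le continuous_const (continuous_linCSP uL)))
  have hKcpt : ∀ k, IsCompact (K k) := fun k => hM.of_isClosed_subset (hKcl k) fun _ h => h.1
  have hanti : ∀ k l : ℕ, k ≤ l → K l ⊆ K k := by
    intro k l hkl φ hφ
    have hcast : (k:ℝ) + 1 ≤ (l:ℝ) + 1 := by
      have : (k:ℝ) ≤ l := Nat.cast_le.mpr hkl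
      linarith
    have hfrac : (1:ℝ)/(l+1) ≤ 1/(k+1) := one_div_le_one_div_of_le (by positivity) hcast
    exact ⟨hφ.1, le_trans (by linarith) hφ.2.1, hφ.2.2⟩
  have hdir : Directed (fun (x1 x2 : Set (Fin m × Fin n → ℝ)) => x1 ⊇ x2) K := by
    intro a b
    exact ⟨max a b, hanti a (max a b) (le_max_left _ _), hanti b (max a b) (le_max_right _ _)⟩
  obtain ⟨φ, hφ⟩ := IsCompact.nonempty_iInter_of_directed_nonempty_isCompact_isClosed
    K hdir hKne hKcpt hKcl
  simp only [Set.mem_iInter] at hφ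
  have hφM : φ ∈ M := (hφ 0).1
  have hmax : linCSP uO φ = mval uO M := by
    refine le_antisymm ((mval_spec hM hne uO).2 φ hφM) ?_
    have : ∀ k : ℕ, mval uO M - 1/(k+1) ≤ linCSP uO φ := fun k => (hφ k).2.1
    by_contra hlt
    push_neg at hlt
    obtain ⟨k, hk⟩ := exists_nat_gt (1 / (mval uO M - linCSP uO φ))
    have hpos : 0 < mval uO M - linCSP uO φ := by linarith
    have h1 : 1 / (mval uO M - linCSP uO φ) < k + 1 := by linarith
    have h2 : (1:ℝ)/(k+1) < mval uO M - linCSP uO φ := by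
      rw [div_lt_iff₀ (by positivity)]
      rw [div_lt_iff₀ hpos] at h1
      linarith
    linarith [this k]
  have hargm : φ ∈ argSet uO M := by
    refine ⟨hφM, fun ψ hψ => ?_⟩
    rw [hmax]
    exact (mval_spec hM hne uO).2 ψ hψ
  obtain ⟨_, _, _, hub⟩ := VL_spec hM hMcl hne uL uO
  have := hub φ hargm
  have := (hφ 0).2.2
  linarith

end Cpt

lemma pureVec_mem_stdSimplex {k : ℕ} (j : Fin k) : pureVec j ∈ stdSimplex ℝ (Fin k) := by
  constructor
  · intro j'; unfold pureVec; by_cases h : j' = j <;> simp [h]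
  · unfold pureVec; simp

lemma prodCSP_pure_mem_simplex {x : Fin m → ℝ} (hx : x ∈ stdSimplex ℝ (Fin m)) (j : Fin n) :
    prodCSP x (pureVec j) ∈ stdSimplex ℝ (Fin m × Fin n) := by
  constructor
  · intro p; exact mul_nonneg (hx.1 p.1) ((pureVec_mem_stdSimplex j).1 p.2)
  · rw [Fintype.sum_prod_type]
    have : ∀ i : Fin m, ∑ j' : Fin n, prodCSP x (pureVec j) (i, j') = x i := by
      intro i
      simp only [prodCSP, ← Finset.mul_sum]
      rw [(pureVec_mem_stdSimplex j).2, mul_one]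
    rw [Finset.sum_congr rfl fun i _ => this i]
    exact hx.2

lemma prodCSP_pure_NSR {u : Fin m → Fin n → ℝ} {x : Fin m → ℝ} {j : Fin n}
    (hj : j ∈ BRL u x) : NoSwapRegret u (prodCSP x (pureVec j)) := by
  intro jc j''
  simp only [prodCSP, pureVec]
  by_cases h : jc = j
  · subst h
    simp only [eq_self_iff_true, if_true, mul_one]
    exact hj j''
  · simp [h]

lemma exists_BR {u : Fin m → Fin n → ℝ} (hn : 0 < n) (x : Fin m → ℝ) :
    ∃ j : Fin n, j ∈ BRL u x := by
  obtain ⟨j, _, hj⟩ := Finset.exists_max_image (Finset.univ : Finset (Fin n))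
    (fun j => ∑ i, x i * u i j) ⟨⟨0, hn⟩, Finset.mem_univ _⟩
  exact ⟨j, fun j' => hj j' (Finset.mem_univ _)⟩

lemma isMenu_MNSR (hn : 0 < n) (u : Fin m → Fin n → ℝ) : IsMenu (MNSR u) := by
  refine ⟨?_, ?_, fun φ hφ => hφ.1, ?_⟩
  · have : MNSR u = stdSimplex ℝ (Fin m × Fin n) ∩
        ⋂ j : Fin n, ⋂ j' : Fin n, {φ | (∑ i, φ (i, j) * u i j') ≤ ∑ i, φ (i, j) * u i j} := by
      ext φ
      simp only [MNSR, Set.mem_setOf_eq, Set.mem_inter_iff, Set.mem_iInter, NoSwapRegret]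
    rw [this]
    refine (isClosed_stdSimplex ℝ _).inter (isClosed_iInter fun j => isClosed_iInter fun j' => ?_)
    exact isClosed_le
      (continuous_finset_sum _ fun i _ => (continuous_apply (i, j)).mul continuous_const)
      (continuous_finset_sum _ fun i _ => (continuous_apply (i, j)).mul continuous_const)
  · intro φ hφ ψ hψ a b ha hb hab
    refine ⟨(convex_stdSimplex ℝ _) hφ.1 hψ.1 ha hb hab, ?_⟩
    intro j j'
    have h1 := hφ.2 j j'
    have h2 := hψ.2 j j'
    have e : ∀ j'' : Fin n, (∑ i, (a • φ + b • ψ) (i, j) * u i j'') =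
        a * (∑ i, φ (i, j) * u i j'') + b * (∑ i, ψ (i, j) * u i j'') := by
      intro j''
      rw [Finset.mul_sum, Finset.mul_sum, ← Finset.sum_add_distrib]
      congr 1; ext i
      simp only [Pi.add_apply, Pi.smul_apply, smul_eq_mul]
      ring
    rw [e j', e j]
    exact add_le_add (mul_le_mul_of_nonneg_left h1 ha) (mul_le_mul_of_nonneg_left h2 hb)
  · intro x hx
    obtain ⟨j, hj⟩ := exists_BR hn x
    exact ⟨pureVec j, pureVec_mem_stdSimplex j,
      prodCSP_pure_mem_simplex hx j, prodCSP_pure_NSR hj⟩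


/-- payoff of action j against x -/
def pay (u : Fin m → Fin n → ℝ) (x : Fin m → ℝ) (j : Fin n) : ℝ := ∑ i, x i * u i j

lemma pay_combo (u : Fin m → Fin n → ℝ) (x x' : Fin m → ℝ) (a b : ℝ) (j : Fin n) :
    pay u (a • x + b • x') j = a * pay u x j + b * pay u x' j := by
  unfold pay
  rw [Finset.mul_sum, Finset.mul_sum, ← Finset.sum_add_distrib]
  congr 1; ext i; simp only [Pi.add_apply, Pi.smul_apply, smul_eq_mul]; ring

/-- If y is a mixed response to x and x⊗y is no-swap-regret, then the support of y
consists of best responses. -/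
lemma support_BR {u : Fin m → Fin n → ℝ} {x : Fin m → ℝ} {y : Fin n → ℝ}
    (hNSR : NoSwapRegret u (prodCSP x y)) {j' : Fin n} (hy : 0 < y j') : j' ∈ BRL u x := by
  intro j''
  have h := hNSR j' j''
  simp only [prodCSP] at h
  have e : ∀ jj : Fin n, (∑ i, x i * y j' * u i jj) = y j' * ∑ i, x i * u i jj := by
    intro jj; rw [Finset.mul_sum]; congr 1; ext i; ring
  rw [e j'', e j'] at h
  exact le_of_mul_le_mul_left h hy

/-- Unique-BR mixtures: mixing towards a unique-BR point keeps uniqueness (for positive weight). -/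
lemma unique_BR_mix {u : Fin m → Fin n → ℝ} {x x' : Fin m → ℝ} {j : Fin n}
    (hj : j ∈ BRL u x) (hx' : BRL u x' = {j}) {lam : ℝ} (h0 : 0 < lam) (h1 : lam ≤ 1) :
    ∀ j' : Fin n, j' ∈ BRL u ((1 - lam) • x + lam • x') → j' = j := by
  intro j' hj'
  by_contra hne
  -- j' is not a best response to x' : some action beats it, and j beats that
  have hjx' : j ∈ BRL u x' := by rw [hx']; rfl
  have hj'x' : j' ∉ BRL u x' := by rw [hx']; exact hne
  have hstrict : pay u x' j' < pay u x' j := by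
    simp only [BRL, Set.mem_setOf_eq, not_forall, not_le] at hj'x'
    obtain ⟨j2, hj2⟩ := hj'x'
    exact lt_of_lt_of_le hj2 (hjx' j2)
  have hweak : pay u x j' ≤ pay u x j := hj j'
  have hcmp : pay u ((1 - lam) • x + lam • x') j' < pay u ((1 - lam) • x + lam • x') j := by
    rw [pay_combo, pay_combo]
    have h1' : (1 - lam) * pay u x j' ≤ (1 - lam) * pay u x j :=
      mul_le_mul_of_nonneg_left hweak (by linarith)
    have h2' : lam * pay u x' j' < lam * pay u x' j :=
      mul_lt_mul_of_pos_left hstrict h0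
    linarith
  exact absurd (hj' j) (not_le.2 hcmp)

/-- Forcing: a menu contained in MNSR contains every best-response product point. -/
lemma forcing {u : Fin m → Fin n → ℝ} {M : Set (Fin m × Fin n → ℝ)}
    (hA2 : A2cond u) (hMenu : IsMenu M) (hsub : M ⊆ MNSR u)
    {x : Fin m → ℝ} (hx : x ∈ stdSimplex ℝ (Fin m)) {j : Fin n} (hj : j ∈ BRL u x) :
    prodCSP x (pureVec j) ∈ M := by
  obtain ⟨hcl, hconv, hsimp, hresp⟩ := hMenu
  obtain ⟨x', hx', hux'⟩ := hA2 j ⟨x, hx, hj⟩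
  -- the mixed points
  set xl : ℕ → Fin m → ℝ := fun k => (1 - (1:ℝ)/(k+1)) • x + ((1:ℝ)/(k+1)) • x' with hxl
  have hlam : ∀ k : ℕ, 0 < (1:ℝ)/(k+1) ∧ (1:ℝ)/(k+1) ≤ 1 := by
    intro k
    constructor
    · positivity
    · rw [div_le_one (by positivity)]
      have : (0:ℝ) ≤ k := Nat.cast_nonneg k
      linarith
  have hxlmem : ∀ k, xl k ∈ stdSimplex ℝ (Fin m) := by
    intro k
    exact (convex_stdSimplex ℝ _) hx hx' (by linarith [(hlam k).2]) (le_of_lt (hlam k).1)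
      (by ring)
  have hmemM : ∀ k, prodCSP (xl k) (pureVec j) ∈ M := by
    intro k
    obtain ⟨y, hy, hyM⟩ := hresp (xl k) (hxlmem k)
    have hNSR : NoSwapRegret u (prodCSP (xl k) y) := (hsub hyM).2
    have hy_supp : ∀ j' : Fin n, 0 < y j' → j' = j := by
      intro j' hpos
      exact unique_BR_mix hj hux' (hlam k).1 (hlam k).2 j' (support_BR hNSR hpos)
    -- y = pureVec j
    have hyeq : y = pureVec j := by
      funext j'
      by_cases hcase : j' = j
      · subst hcase
        have : ∑ j'' : Fin n, y j'' = 1 := hy.2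
        have hz : ∀ j'' ∈ (Finset.univ : Finset (Fin n)), j'' ≠ j' → y j'' = 0 := by
          intro j'' _ hne
          rcases eq_or_lt_of_le (hy.1 j'') with h | h
          · exact h.symm
          · exact absurd (hy_supp j'' h) hne
        rw [← Finset.sum_subset (Finset.subset_univ {j'}) (fun j'' _ hne => hz j''
          (Finset.mem_univ _) (by simpa using hne))] at this
        simp only [Finset.sum_singleton] at this
        simp [pureVec, this]
      · have : y j' = 0 := by
          rcases eq_or_lt_of_le (hy.1 j') with h | h
          · exact h.symm
          · exact absurd (hy_supp j' h) hcase
        simp [pureVec, this, hcase]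
      
    rw [hyeq] at hyM
    exact hyM
  -- take the limit k → ∞
  have hconv' : Filter.Tendsto (fun k => prodCSP (xl k) (pureVec j)) Filter.atTop
      (nhds (prodCSP x (pureVec j))) := by
    rw [tendsto_pi_nhds]
    intro p
    simp only [prodCSP, hxl, Pi.add_apply, Pi.smul_apply, smul_eq_mul]
    have hl : Filter.Tendsto (fun k : ℕ => (1:ℝ)/(k+1)) Filter.atTop (nhds 0) :=
      tendsto_one_div_add_atTop_nhds_zero_nat
    have h2 : Filter.Tendsto (fun k : ℕ =>
        ((1 - (1:ℝ)/(k+1)) * x p.1 + (1:ℝ)/(k+1) * x' p.1) * pureVec j p.2) Filter.atTop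
        (nhds (((1 - (0:ℝ)) * x p.1 + (0:ℝ) * x' p.1) * pureVec j p.2)) :=
      (((tendsto_const_nhds.sub hl).mul tendsto_const_nhds).add
        (hl.mul tendsto_const_nhds)).mul tendsto_const_nhds
    have h3 : ((1 - (0:ℝ)) * x p.1 + (0:ℝ) * x' p.1) * pureVec j p.2
        = x p.1 * pureVec j p.2 := by ring
    rw [h3] at h2
    exact h2
  exact hcl.mem_of_tendsto hconv' (Filter.Eventually.of_forall hmemM)


open scoped Classical

/-- Every no-swap-regret CSP is a convex combination of best-response product points;
hence it lies in any convex set containing all best-response product points. -/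
lemma NSR_subset_of_forcing {u : Fin m → Fin n → ℝ} {M : Set (Fin m × Fin n → ℝ)}
    (hconv : Convex ℝ M)
    (hforce : ∀ x ∈ stdSimplex ℝ (Fin m), ∀ j ∈ BRL u x, prodCSP x (pureVec j) ∈ M) :
    MNSR u ⊆ M := by
  intro φ hφ
  obtain ⟨hsimp, hNSR⟩ := hφ
  set c : Fin n → ℝ := fun j => ∑ i, φ (i, j) with hc
  have hcnn : ∀ j, 0 ≤ c j := fun j => Finset.sum_nonneg fun i _ => hsimp.1 (i, j)
  have hcsum : ∑ j, c j = 1 := by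
    rw [hc]
    rw [← hsimp.2, Fintype.sum_prod_type_right]
  set S : Finset (Fin n) := Finset.univ.filter (fun j => c j ≠ 0) with hS
  set xx : Fin n → Fin m → ℝ := fun j i => φ (i, j) / c j with hxx
  have hxmem : ∀ j ∈ S, xx j ∈ stdSimplex ℝ (Fin m) := by
    intro j hj
    have hcj : 0 < c j := lt_of_le_of_ne (hcnn j) (Ne.symm (by simpa [hS] using hj))
    constructor
    · intro i; exact div_nonneg (hsimp.1 (i, j)) (le_of_lt hcj)
    · rw [← Finset.sum_div, div_eq_one_iff_eq (ne_of_gt hcj)]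
  have hBR : ∀ j ∈ S, j ∈ BRL u (xx j) := by
    intro j hj j'
    have hcj : 0 < c j := lt_of_le_of_ne (hcnn j) (Ne.symm (by simpa [hS] using hj))
    have h := hNSR j j'
    have e : ∀ jj : Fin n, (∑ i, xx j i * u i jj) = (∑ i, φ (i, j) * u i jj) / c j := by
      intro jj
      rw [Finset.sum_div]
      congr 1; ext i
      rw [hxx]; ring
    rw [e j', e j]
    exact div_le_div_of_nonneg_right h hcj.le
  -- φ as a convex combination over S
  have hSsum : ∑ j ∈ S, c j = 1 := by
    rw [← hcsum]
    exact Finset.sum_filter_ne_zero Finset.univ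
  have hrepr : φ = ∑ j ∈ S, c j • prodCSP (xx j) (pureVec j) := by
    funext p
    rw [Finset.sum_apply]
    have e1 : ∀ j ∈ S, (c j • prodCSP (xx j) (pureVec j)) p
        = if p.2 = j then c j * (φ (p.1, j) / c j) else 0 := by
      intro j _
      simp only [Pi.smul_apply, smul_eq_mul, prodCSP, pureVec, hxx]
      by_cases h : p.2 = j <;> simp [h] <;> ring
    rw [Finset.sum_congr rfl e1, Finset.sum_ite_eq S p.2 (fun j => c j * (φ (p.1, j) / c j))]
    by_cases hmem : p.2 ∈ S
    · rw [if_pos hmem]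
      have hcj : c p.2 ≠ 0 := by simpa [hS] using hmem
      rw [mul_div_cancel₀ _ hcj]
    · rw [if_neg hmem]
      have hcz : c p.2 = 0 := by
        by_contra hne
        exact hmem (by simp [hS, hne])
      have : ∀ i ∈ (Finset.univ : Finset (Fin m)), 0 ≤ φ (i, p.2) :=
        fun i _ => hsimp.1 (i, p.2)
      have hz := (Finset.sum_eq_zero_iff_of_nonneg this).1 hcz
      rw [show p = (p.1, p.2) from rfl]; exact hz p.1 (Finset.mem_univ _)
  rw [hrepr]
  refine hconv.sum_mem (fun j hj => hcnn j) hSsum (fun j hj => ?_)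
  exact hforce (xx j) (hxmem j hj) j (hBR j hj)


section Creep

variable {uL : Fin m → Fin n → ℝ} (hb : ∀ i j, uL i j ∈ Set.Icc (-1:ℝ) 1)
variable {N M' : Set (Fin m × Fin n → ℝ)}
variable (hN : IsCompact N) (hNcl : IsClosed N) (hNne : N.Nonempty)
  (hNsub : N ⊆ stdSimplex ℝ (Fin m × Fin n))
variable (hM : IsCompact M') (hMcl : IsClosed M') (hMne : M'.Nonempty)
  (hMsub : M' ⊆ stdSimplex ℝ (Fin m × Fin n))

include hb in
lemma mval_lip {C : Set (Fin m × Fin n → ℝ)} (hC : IsCompact C) (hCne : C.Nonempty)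
    (hCsub : C ⊆ stdSimplex ℝ (Fin m × Fin n)) (uO : Fin m → Fin n → ℝ) (r s : ℝ) :
    mval (fun i j => uO i j + r * uL i j) C ≤ mval (fun i j => uO i j + s * uL i j) C
      + |r - s| := by
  refine csSup_le ((hCne.image _)) ?_
  rintro _ ⟨φ, hφ, rfl⟩
  have h1 : linCSP (fun i j => uO i j + r * uL i j) φ
      = linCSP (fun i j => uO i j + s * uL i j) φ + (r - s) * linCSP uL φ := by
    rw [linCSP_combo, linCSP_combo]; ring
  have h2 := (mval_spec hC hCne (fun i j => uO i j + s * uL i j)).2 φ hφ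
  have h3 : (r - s) * linCSP uL φ ≤ |r - s| := by
    calc (r - s) * linCSP uL φ ≤ |(r - s) * linCSP uL φ| := le_abs_self _
      _ = |r - s| * |linCSP uL φ| := abs_mul _ _
      _ ≤ |r - s| * 1 := mul_le_mul_of_nonneg_left (abs_linCSP_le_one hb (hCsub hφ))
          (abs_nonneg _)
      _ = |r - s| := mul_one _
  linarith

include hb hN hNcl hNne hNsub hM hMcl hMne hMsub in
/-- The creep lemma: under pointwise VL-domination along the tilt line, the
support-function gap is monotone. -/
lemma creep (uO : Fin m → Fin n → ℝ) (T : ℝ) (hT : 0 ≤ T)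
    (H : ∀ r : ℝ, VL uL (fun i j => uO i j + r * uL i j) N
      ≤ VL uL (fun i j => uO i j + r * uL i j) M') :
    mval (fun i j => uO i j + 0 * uL i j) M' - mval (fun i j => uO i j + 0 * uL i j) N
      ≤ mval (fun i j => uO i j + T * uL i j) M' - mval (fun i j => uO i j + T * uL i j) N := by
  set g : ℝ → ℝ := fun r => mval (fun i j => uO i j + r * uL i j) M'
    - mval (fun i j => uO i j + r * uL i j) N with hg
  -- continuity of g
  have hgcont : Continuous g := by
    rw [Metric.continuous_iff]
    intro r ε hε
    refine ⟨ε/4, by positivity, fun s hs => ?_⟩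
    have hrs : |s - r| < ε/4 := by rwa [Real.dist_eq] at hs
    have hrs' : |r - s| < ε/4 := by rwa [abs_sub_comm] at hrs
    have l1 := mval_lip hb hM hMne hMsub uO s r
    have l2 := mval_lip hb hM hMne hMsub uO r s
    have l3 := mval_lip hb hN hNne hNsub uO s r
    have l4 := mval_lip hb hN hNne hNsub uO r s
    rw [Real.dist_eq, hg]
    rw [abs_lt]
    constructor <;> simp only <;> linarith
  suffices hs : ∀ ε > 0, g 0 ≤ g T + ε * (T + 1) by
    rcases eq_or_lt_of_le hT with h | h
    · simp [← h]
    · by_contra hcon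
      push_neg at hcon
      have hgT : g T < g 0 := by simp only [hg]; exact hcon
      have hTpos : (0:ℝ) < T + 1 := by linarith
      have hd := div_pos (by linarith : (0:ℝ) < g 0 - g T) (by linarith : (0:ℝ) < 2*(T+1))
      have h2 := hs _ hd
      have h3 : (g 0 - g T) / (2 * (T + 1)) * (T + 1) = (g 0 - g T) / 2 := by
        field_simp
      rw [h3] at h2
      linarith
  intro ε hε
  set S : Set ℝ := {r ∈ Set.Icc 0 T | g 0 - ε * r ≤ g r} with hSdef
  have hS0 : (0:ℝ) ∈ S := ⟨⟨le_refl _, hT⟩, by simp⟩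
  have hScl : IsClosed S := by
    have : S = Set.Icc 0 T ∩ {r | g 0 - ε * r ≤ g r} := rfl
    rw [this]
    exact isClosed_Icc.inter (isClosed_le
      (continuous_const.sub (continuous_const.mul continuous_id)) hgcont)
  have hScpt : IsCompact S := isCompact_Icc.of_isClosed_subset hScl fun r hr => hr.1
  have hSbdd : BddAbove S := hScpt.bddAbove
  set T' := sSup S with hT'
  have hT'S : T' ∈ S := hScpt.sSup_mem ⟨0, hS0⟩
  have hT'le : T' ≤ T := hT'S.1.2
  rcases eq_or_lt_of_le hT'le with heq | hlt
  · -- T' = T : done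
    have := hT'S.2
    rw [heq] at this
    linarith
  · -- T' < T : extend, contradiction
    exfalso
    set r := T' with hr
    set v := VL uL (fun i j => uO i j + r * uL i j) N with hv
    obtain ⟨δ, hδ, hB⟩ := usc_bound hN hNcl hNne uL (fun i j => uO i j + r * uL i j) hε
    set h0 := δ / (2 + |v| + ε) with hh0
    have hden : (0:ℝ) < 2 + |v| + ε := by positivity
    have hh0pos : 0 < h0 := by positivity
    set h := min h0 (T - T') with hh
    have hhpos : 0 < h := lt_min hh0pos (by linarith)
    have hhh0 : h ≤ h0 := min_le_left _ _
    have hhT : r + h ≤ T := by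
      have h2 : h ≤ T - T' := hh ▸ min_le_right _ _
      have h3 : r = T' := hr
      linarith
    -- upper bound for N
    have key1 : mval (fun i j => uO i j + (r + h) * uL i j) N
        ≤ mval (fun i j => uO i j + r * uL i j) N + h * (v + ε) := by
      refine csSup_le (hNne.image _) ?_
      rintro _ ⟨φ, hφ, rfl⟩
      have hcomb : linCSP (fun i j => uO i j + (r + h) * uL i j) φ
          = linCSP (fun i j => uO i j + r * uL i j) φ + h * linCSP uL φ := by
        rw [linCSP_combo, linCSP_combo]; ring
      have hub := (mval_spec hN hNne (fun i j => uO i j + r * uL i j)).2 φ hφ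
      have habs := abs_linCSP_le_one hb (hNsub hφ)
      by_cases hcase : mval (fun i j => uO i j + r * uL i j) N - δ
          ≤ linCSP (fun i j => uO i j + r * uL i j) φ
      · have := hB φ hφ hcase
        rw [hcomb]
        nlinarith
      · push_neg at hcase
        rw [hcomb]
        have h1 : linCSP uL φ ≤ 1 := le_of_abs_le habs
        have h2 : h * (1 - (v + ε)) ≤ δ := by
          rcases le_or_gt (1 - (v + ε)) 0 with hc | hc
          · nlinarith
          · have : h * (1 - (v + ε)) ≤ h0 * (2 + |v| + ε) := by
              apply mul_le_mul hhh0 _ (le_of_lt hc) (le_of_lt hh0pos)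
              have := le_abs_self v
              have := neg_abs_le v
              have := abs_nonneg v
              linarith
            rw [hh0, div_mul_cancel₀ _ (ne_of_gt hden)] at this
            linarith
        nlinarith
    -- lower bound for M'
    have key2 := slope_lower hM hMcl hMne uL uO r h (le_of_lt hhpos)
    have hH := H r
    have hrS : g 0 - ε * r ≤ g r := hT'S.2
    have hnew : g 0 - ε * (r + h) ≤ g (r + h) := by
      have : g r - ε * h ≤ g (r + h) := by
        rw [hg]
        simp only
        nlinarith [key1, key2, hH]
      nlinarith
    have hr0 : 0 ≤ r := hT'S.1.1
    have hmem : r + h ∈ S := ⟨⟨by linarith, hhT⟩, hnew⟩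
    have h4 := le_csSup hSbdd hmem
    rw [← hT'] at h4
    linarith

end Creep

/-- sum against a pure row strategy -/
lemma pay_pure (u : Fin m → Fin n → ℝ) (i0 : Fin m) (j : Fin n) :
    (∑ i, pureVec i0 i * u i j) = u i0 j := by
  unfold pureVec
  rw [Finset.sum_congr rfl (fun i _ => by
    rw [ite_mul, one_mul, zero_mul] : ∀ i ∈ univ,
      (if i = i0 then (1:ℝ) else 0) * u i j = if i = i0 then u i j else 0)]
  simp

lemma lin_delta (u : Fin m → Fin n → ℝ) (i0 : Fin m) (j0 : Fin n) :
    linCSP u (prodCSP (pureVec i0) (pureVec j0)) = u i0 j0 := by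
  unfold linCSP prodCSP pureVec
  rw [Fintype.sum_prod_type]
  have h1 : ∀ i : Fin m, (∑ j : Fin n,
      ((if i = i0 then (1:ℝ) else 0) * (if j = j0 then (1:ℝ) else 0)) * u i j)
      = (if i = i0 then (1:ℝ) else 0) * u i j0 := by
    intro i
    rw [Finset.sum_congr rfl (fun j _ => by
      by_cases h : j = j0 <;> simp [h] : ∀ j ∈ univ,
        ((if i = i0 then (1:ℝ) else 0) * (if j = j0 then (1:ℝ) else 0)) * u i j
          = if j = j0 then (if i = i0 then (1:ℝ) else 0) * u i j else 0)]
    simp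
  rw [Finset.sum_congr rfl fun i _ => h1 i]
  rw [Finset.sum_congr rfl (fun i _ => by
    by_cases h : i = i0 <;> simp [h] : ∀ i ∈ univ,
      (if i = i0 then (1:ℝ) else 0) * u i j0 = if i = i0 then u i0 j0 else 0)]
  simp

/-- the A1 point is in the no-swap-regret menu -/
lemma deltaStar_mem {uL : Fin m → Fin n → ℝ} {ps : Fin m × Fin n}
    (hA1 : ∀ q : Fin m × Fin n, q ≠ ps → uL q.1 q.2 < uL ps.1 ps.2) :
    prodCSP (pureVec ps.1) (pureVec ps.2) ∈ MNSR uL := by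
  have hBR : ps.2 ∈ BRL uL (pureVec ps.1) := by
    intro j'
    rw [pay_pure, pay_pure]
    by_cases h : j' = ps.2
    · rw [h]
    · exact le_of_lt (hA1 (ps.1, j') (by simp [Prod.ext_iff, h]))
  exact ⟨prodCSP_pure_mem_simplex (pureVec_mem_stdSimplex ps.1) ps.2, prodCSP_pure_NSR hBR⟩

/-- generic upper bound by splitting off the p* coordinate -/
lemma lin_bound_erase {u : Fin m → Fin n → ℝ} {ps : Fin m × Fin n} {B : ℝ}
    (hB : ∀ q : Fin m × Fin n, q ≠ ps → u q.1 q.2 ≤ B)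
    {φ : Fin m × Fin n → ℝ} (hφ : φ ∈ stdSimplex ℝ (Fin m × Fin n)) :
    linCSP u φ ≤ φ ps * u ps.1 ps.2 + (1 - φ ps) * B := by
  have hsplit : linCSP u φ = φ ps * u ps.1 ps.2
      + ∑ q ∈ Finset.univ.erase ps, φ q * u q.1 q.2 := by
    unfold linCSP
    rw [← Finset.add_sum_erase _ _ (Finset.mem_univ ps)]
  have hmass : ∑ q ∈ Finset.univ.erase ps, φ q = 1 - φ ps := by
    have := Finset.add_sum_erase (Finset.univ) φ (Finset.mem_univ ps)
    rw [hφ.2] at this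
    linarith
  have hbnd : ∑ q ∈ Finset.univ.erase ps, φ q * u q.1 q.2
      ≤ ∑ q ∈ Finset.univ.erase ps, φ q * B := by
    refine Finset.sum_le_sum fun q hq => ?_
    exact mul_le_mul_of_nonneg_left (hB q (Finset.ne_of_mem_erase hq)) (hφ.1 q)
  rw [hsplit]
  calc φ ps * u ps.1 ps.2 + ∑ q ∈ Finset.univ.erase ps, φ q * u q.1 q.2
      ≤ φ ps * u ps.1 ps.2 + ∑ q ∈ Finset.univ.erase ps, φ q * B := by linarith
    _ = φ ps * u ps.1 ps.2 + (1 - φ ps) * B := by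
        rw [← Finset.sum_mul, hmass]

/-- Step 1: any compact menu-like set weakly VL-dominating MNSR is contained in MNSR. -/
theorem subset_MNSR {uL : Fin m → Fin n → ℝ}
    (hb : ∀ i j, uL i j ∈ Set.Icc (-1:ℝ) 1)
    {ps : Fin m × Fin n}
    (hA1 : ∀ q : Fin m × Fin n, q ≠ ps → uL q.1 q.2 < uL ps.1 ps.2)
    {M' : Set (Fin m × Fin n → ℝ)} (hMcl : IsClosed M') (hMne : M'.Nonempty)
    (hMsub : M' ⊆ stdSimplex ℝ (Fin m × Fin n))
    (hNcl : IsClosed (MNSR uL)) (hNconv : Convex ℝ (MNSR uL))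
    (H : ∀ uO : Fin m → Fin n → ℝ, VL uL uO (MNSR uL) ≤ VL uL uO M') :
    M' ⊆ MNSR uL := by
  set N := MNSR uL with hNdef
  have hNsub : N ⊆ stdSimplex ℝ (Fin m × Fin n) := fun φ hφ => hφ.1
  have hNcpt : IsCompact N := (isCompact_stdSimplex ℝ _).of_isClosed_subset hNcl hNsub
  have hMcpt : IsCompact M' := (isCompact_stdSimplex ℝ _).of_isClosed_subset hMcl hMsub
  have hNne : N.Nonempty := ⟨_, deltaStar_mem hA1⟩
  -- gap
  have hgap : ∃ gap > 0, ∀ q : Fin m × Fin n, q ≠ ps → uL q.1 q.2 ≤ uL ps.1 ps.2 - gap := by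
    by_cases hS : (Finset.univ.erase ps).Nonempty
    · obtain ⟨qm, hqmS, hqm⟩ := Finset.exists_max_image (Finset.univ.erase ps)
        (fun q => uL q.1 q.2) hS
      refine ⟨uL ps.1 ps.2 - uL qm.1 qm.2, by
        have := hA1 qm (Finset.ne_of_mem_erase hqmS); linarith, ?_⟩
      intro q hq
      have := hqm q (Finset.mem_erase.2 ⟨hq, Finset.mem_univ q⟩)
      linarith
    · refine ⟨1, one_pos, fun q hq => absurd ?_ hS⟩
      exact ⟨q, Finset.mem_erase.2 ⟨hq, Finset.mem_univ q⟩⟩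
  obtain ⟨gap, hgappos, hgapspec⟩ := hgap
  -- main support-function comparison
  have hsupp : ∀ uO : Fin m → Fin n → ℝ, mval uO M' ≤ mval uO N := by
    intro uO
    obtain ⟨qM, _, hqM⟩ := Finset.exists_max_image (Finset.univ : Finset (Fin m × Fin n))
      (fun q => uO q.1 q.2) ⟨ps, Finset.mem_univ ps⟩
    set K := uO qM.1 qM.2 - uO ps.1 ps.2 with hK
    have hK0 : 0 ≤ K := by
      have := hqM ps (Finset.mem_univ ps); simp only [hK]; linarith
    set T := K / gap with hT
    have hTpos : 0 ≤ T := div_nonneg hK0 (le_of_lt hgappos)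
    -- large-T comparison
    have hlarge : mval (fun i j => uO i j + T * uL i j) M'
        ≤ mval (fun i j => uO i j + T * uL i j) N := by
      have hub : ∀ φ ∈ M', linCSP (fun i j => uO i j + T * uL i j) φ
          ≤ linCSP (fun i j => uO i j + T * uL i j)
            (prodCSP (pureVec ps.1) (pureVec ps.2)) := by
        intro φ hφ
        have hφs := hMsub hφ
        have hbnd1 : linCSP uO φ ≤ φ ps * uO ps.1 ps.2 + (1 - φ ps) * (uO ps.1 ps.2 + K) := by
          refine lin_bound_erase (fun q _ => ?_) hφs
          have := hqM q (Finset.mem_univ q); simp only [hK]; linarith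
        have hbnd2 : linCSP uL φ ≤ φ ps * uL ps.1 ps.2 + (1 - φ ps) * (uL ps.1 ps.2 - gap) :=
          lin_bound_erase (fun q hq => hgapspec q hq) hφs
        have hcombo : linCSP (fun i j => uO i j + T * uL i j) φ
            = linCSP uO φ + T * linCSP uL φ := by
          unfold linCSP; rw [Finset.mul_sum, ← Finset.sum_add_distrib]
          congr 1; ext p; ring
        have hdelta : linCSP (fun i j => uO i j + T * uL i j)
            (prodCSP (pureVec ps.1) (pureVec ps.2)) = uO ps.1 ps.2 + T * uL ps.1 ps.2 :=
          lin_delta _ ps.1 ps.2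
        rw [hcombo, hdelta]
        have hmass1 : φ ps ≤ 1 := by
          have := Finset.single_le_sum (f := φ) (fun q _ => hφs.1 q) (Finset.mem_univ ps)
          rwa [hφs.2] at this
        have hmass0 : 0 ≤ φ ps := hφs.1 ps
        have hTgap : K ≤ T * gap := by
          rw [hT, div_mul_cancel₀ _ (ne_of_gt hgappos)]
        nlinarith [hbnd2, hbnd1]
      refine csSup_le (hMne.image _) ?_
      rintro _ ⟨φ, hφ, rfl⟩
      refine le_trans (hub φ hφ) ?_
      exact (mval_spec hNcpt hNne _).2 _ (deltaStar_mem hA1)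
    -- creep from 0 to T
    have hcreep := creep hb hNcpt hNcl hNne hNsub hMcpt hMcl hMne hMsub uO T hTpos
      (fun r => H (fun i j => uO i j + r * uL i j))
    have hzero : (fun i j => uO i j + 0 * uL i j) = uO := by funext i j; ring
    rw [hzero] at hcreep
    linarith
  -- separation
  intro φ0 hφ0
  by_contra hnot
  obtain ⟨f, u, hfN, hfφ0⟩ := geometric_hahn_banach_closed_point hNconv hNcl hnot
  set uO0 : Fin m → Fin n → ℝ := fun i j => f (fun q => if (i, j) = q then (1:ℝ) else 0)
    with huO0
  have hlin : ∀ φ : Fin m × Fin n → ℝ, linCSP uO0 φ = f φ := by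
    intro φ
    conv_rhs => rw [pi_eq_sum_univ φ]
    rw [map_sum]
    unfold linCSP
    refine Finset.sum_congr rfl fun p _ => ?_
    rw [map_smul, smul_eq_mul]
  have h1 : f φ0 ≤ mval uO0 M' := by
    rw [← hlin φ0]
    exact (mval_spec hMcpt hMne uO0).2 φ0 hφ0
  have h2 : mval uO0 N < u := by
    obtain ⟨⟨ψ, hψ, hψe⟩, _⟩ := mval_spec hNcpt hNne uO0
    rw [← hψe, hlin ψ]
    exact hfN ψ hψ
  have := hsupp uO0
  linarith


end NSR

/-- Assume (A1) and (A2). The no-swap-regret menu is a menu and is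
Pareto-optimal. -/
theorem nsr_menu_pareto_optimal
    (m n : ℕ) (hm : 0 < m) (hn : 0 < n)
    (uL : Fin m → Fin n → ℝ) (hbound : ∀ i j, uL i j ∈ Set.Icc (-1 : ℝ) 1)
    (hA1 : ∃ p : Fin m × Fin n, ∀ q : Fin m × Fin n, q ≠ p → uL q.1 q.2 < uL p.1 p.2)
    (hA2 : A2cond uL) :
    IsMenu (MNSR uL) ∧ ParetoOptimal uL (MNSR uL) := by
  have hMenu : IsMenu (MNSR uL) := NSR.isMenu_MNSR hn uL
  refine ⟨hMenu, hMenu, ?_⟩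
  intro M' hM' hdom
  obtain ⟨H, uO0, hstrict⟩ := hdom
  obtain ⟨ps, hps⟩ := hA1
  have hMcl : IsClosed M' := hM'.1
  have hMconv : Convex ℝ M' := hM'.2.1
  have hMsub : M' ⊆ stdSimplex ℝ (Fin m × Fin n) := hM'.2.2.1
  have hMne : M'.Nonempty := by
    obtain ⟨y, _, hmemb⟩ := hM'.2.2.2 (pureVec ⟨0, hm⟩) (NSR.pureVec_mem_stdSimplex _)
    exact ⟨_, hmemb⟩
  have hsub : M' ⊆ MNSR uL :=
    NSR.subset_MNSR hbound hps hMcl hMne hMsub hMenu.1 hMenu.2.1 H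
  have hsup : MNSR uL ⊆ M' :=
    NSR.NSR_subset_of_forcing hMconv (fun x hx j hj => NSR.forcing hA2 hM' hsub hx hj)
  have heq : M' = MNSR uL := Set.Subset.antisymm hsub hsup
  rw [heq] at hstrict
  exact lt_irrefl _ hstrict
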